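/- The complex projective line is homeomorphic to the 2-sphere: there exists a homeomorphism between ℂP¹, the projectivization ℙ(ℂ²) of the complex vector space ℂ² (the space of one-dimensional complex subspaces, with the quotient topology), and the unit sphere S² = Metric.sphere 0 1 in EuclideanSpace ℝ (Fin 3). -/

import Mathlib

open scoped LinearAlgebra.Projectivization

/-- The quotient topology on `ℂP¹ = ℙ(ℂ²)`, induced from `ℂ² \ {0}`. -/
instance : TopologicalSpace (ℙ ℂ (Fin 2 → ℂ)) :=
  inferInstanceAs (TopologicalSpace (Quotient (projectivizationSetoid ℂ (Fin 2 → ℂ))))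


open Complex

noncomputable def hopfFun (v : Fin 2 → ℂ) : EuclideanSpace ℝ (Fin 3) :=
  (EuclideanSpace.equiv (Fin 3) ℝ).symm
    ((normSq (v 0) + normSq (v 1))⁻¹ •
      ![2 * (v 0 * starRingEnd ℂ (v 1)).re, 2 * (v 0 * starRingEnd ℂ (v 1)).im,
        normSq (v 0) - normSq (v 1)])

lemma hopf_apply (v : Fin 2 → ℂ) (i : Fin 3) :
    hopfFun v i = (normSq (v 0) + normSq (v 1))⁻¹ *
      ![2 * (v 0 * starRingEnd ℂ (v 1)).re, 2 * (v 0 * starRingEnd ℂ (v 1)).im,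
        normSq (v 0) - normSq (v 1)] i := rfl

lemma npos (v : Fin 2 → ℂ) (hv : v ≠ 0) : 0 < normSq (v 0) + normSq (v 1) := by
  rcases (by by_contra h; push_neg at h; exact hv (funext fun i => by fin_cases i <;> simp_all) :
      v 0 ≠ 0 ∨ v 1 ≠ 0) with h | h
  · have h1 := normSq_pos.mpr h
    have h2 := normSq_nonneg (v 1); linarith
  · have h1 := normSq_pos.mpr h
    have h2 := normSq_nonneg (v 0); linarith

lemma hopf_mem (v : Fin 2 → ℂ) (hv : v ≠ 0) :
    hopfFun v ∈ Metric.sphere (0 : EuclideanSpace ℝ (Fin 3)) 1 := by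
  have hn := npos v hv
  rw [mem_sphere_zero_iff_norm, EuclideanSpace.norm_eq]
  have key : ∑ i : Fin 3, ‖hopfFun v i‖ ^ 2 = 1 := by
    simp only [Fin.sum_univ_three, hopf_apply, Real.norm_eq_abs, sq_abs]
    have h1 : (v 0 * starRingEnd ℂ (v 1)).re ^ 2 + (v 0 * starRingEnd ℂ (v 1)).im ^ 2
        = normSq (v 0) * normSq (v 1) := by
      simp only [normSq_apply, Complex.mul_re, Complex.mul_im, Complex.conj_re, Complex.conj_im]
      ring
    simp only [Matrix.cons_val_zero, Matrix.cons_val_one, Matrix.head_cons,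
      Matrix.cons_val_two, Matrix.tail_cons]
    field_simp
    simp only [normSq_apply] at *
    nlinarith [h1]
  rw [key, Real.sqrt_one]

lemma hopf_smul (c : ℂ) (hc : c ≠ 0) (v : Fin 2 → ℂ) (hv : v ≠ 0) :
    hopfFun (c • v) = hopfFun v := by
  have hnc : normSq c ≠ 0 := (normSq_pos.mpr hc).ne'
  have hn : normSq (v 0) + normSq (v 1) ≠ 0 := (npos v hv).ne'
  unfold hopfFun
  congr 1
  have h0 : (c • v) 0 = c * v 0 := rfl
  have h1 : (c • v) 1 = c * v 1 := rfl
  have hm : (c • v) 0 * starRingEnd ℂ ((c • v) 1)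
      = (normSq c : ℂ) * (v 0 * starRingEnd ℂ (v 1)) := by
    rw [h0, h1, map_mul,
      show (c : ℂ) * v 0 * (starRingEnd ℂ c * starRingEnd ℂ (v 1))
        = (c * starRingEnd ℂ c) * (v 0 * starRingEnd ℂ (v 1)) by ring, Complex.mul_conj]
  have key : normSq ((c • v) 0) + normSq ((c • v) 1)
      = normSq c * (normSq (v 0) + normSq (v 1)) := by
    rw [h0, h1, normSq_mul, normSq_mul]; ring
  have hA : 2 * ((c • v) 0 * starRingEnd ℂ ((c • v) 1)).re
      = normSq c * (2 * (v 0 * starRingEnd ℂ (v 1)).re) := by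
    rw [hm, Complex.re_ofReal_mul]; ring
  have hB : 2 * ((c • v) 0 * starRingEnd ℂ ((c • v) 1)).im
      = normSq c * (2 * (v 0 * starRingEnd ℂ (v 1)).im) := by
    rw [hm, Complex.im_ofReal_mul]; ring
  have hC : normSq ((c • v) 0) - normSq ((c • v) 1)
      = normSq c * (normSq (v 0) - normSq (v 1)) := by
    rw [h0, h1, normSq_mul, normSq_mul]; ring
  rw [hA, hB, hC, key]
  have hvec : ∀ a b d : ℝ, ![normSq c * a, normSq c * b, normSq c * d]
      = normSq c • ![a, b, d] := by
    intro a b d; funext i; fin_cases i <;> simp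
  rw [hvec, smul_smul, mul_inv, mul_assoc,
    show (normSq (v 0) + normSq (v 1))⁻¹ * normSq c
      = normSq c * (normSq (v 0) + normSq (v 1))⁻¹ from mul_comm _ _, ← mul_assoc,
    inv_mul_cancel₀ hnc, one_mul]

noncomputable def hopfProj : ℙ ℂ (Fin 2 → ℂ) → Metric.sphere (0 : EuclideanSpace ℝ (Fin 3)) 1 :=
  Projectivization.lift (fun u => ⟨hopfFun u.1, hopf_mem u.1 u.2⟩)
    (by
      rintro ⟨a, ha⟩ ⟨b, hb⟩ t (h : a = t • b)
      subst h
      have ht : t ≠ 0 := by rintro rfl; simp at ha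
      exact Subtype.ext (hopf_smul t ht b hb))

lemma hopfFun_cont : Continuous fun u : {v : Fin 2 → ℂ // v ≠ 0} => hopfFun u.1 := by
  have h0 : Continuous fun u : {v : Fin 2 → ℂ // v ≠ 0} => u.1 0 :=
    (continuous_apply 0).comp continuous_subtype_val
  have h1 : Continuous fun u : {v : Fin 2 → ℂ // v ≠ 0} => u.1 1 :=
    (continuous_apply 1).comp continuous_subtype_val
  have hinv : Continuous fun u : {v : Fin 2 → ℂ // v ≠ 0} =>
      (Complex.normSq (u.1 0) + Complex.normSq (u.1 1))⁻¹ :=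
    ((Complex.continuous_normSq.comp h0).add (Complex.continuous_normSq.comp h1)).inv₀
      (fun u => (npos u.1 u.2).ne')
  have hp : Continuous fun u : {v : Fin 2 → ℂ // v ≠ 0} => u.1 0 * starRingEnd ℂ (u.1 1) :=
    h0.mul (Complex.continuous_conj.comp h1)
  unfold hopfFun
  refine ((EuclideanSpace.equiv (Fin 3) ℝ).continuous_invFun).comp ?_
  refine hinv.smul (continuous_pi fun i => ?_)
  fin_cases i <;>
    simp only [Matrix.cons_val_zero, Matrix.cons_val_one, Matrix.head_cons, Matrix.cons_val_two,
      Matrix.tail_cons, Fin.isValue]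
  · exact (continuous_const.mul (Complex.continuous_re.comp hp))
  · exact (continuous_const.mul (Complex.continuous_im.comp hp))
  · exact (Complex.continuous_normSq.comp h0).sub (Complex.continuous_normSq.comp h1)

lemma hopfProj_cont : Continuous hopfProj := by
  apply continuous_quot_lift
  exact hopfFun_cont.subtype_mk _

lemma compact_proj : CompactSpace (ℙ ℂ (Fin 2 → ℂ)) := by
  set φ : Metric.sphere (0 : Fin 2 → ℂ) 1 → ℙ ℂ (Fin 2 → ℂ) :=
    fun x => Projectivization.mk ℂ x.1
      (by
        intro h
        have := mem_sphere_zero_iff_norm.mp x.2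
        rw [h] at this; simp at this) with hφ
  have hc : Continuous φ := by
    apply Continuous.comp (continuous_quotient_mk')
    exact continuous_subtype_val.subtype_mk _
  have hs : Function.Surjective φ := by
    intro p
    induction p using Projectivization.ind with
    | h v hv =>
      have hnv : ‖v‖ ≠ 0 := norm_ne_zero_iff.mpr hv
      refine ⟨⟨‖v‖⁻¹ • v, ?_⟩, ?_⟩
      · rw [mem_sphere_zero_iff_norm, norm_smul, norm_inv, norm_norm, inv_mul_cancel₀ hnv]
      · simp only [hφ]
        rw [Projectivization.mk_eq_mk_iff']
        exact ⟨((‖v‖⁻¹ : ℝ) : ℂ), funext fun i => by simp [Complex.real_smul]⟩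
  constructor
  rw [← Set.range_eq_univ.mpr hs]
  exact isCompact_range hc

lemma hopf_inj {v w : Fin 2 → ℂ} (hv : v ≠ 0) (hw : w ≠ 0) (h : hopfFun v = hopfFun w) :
    ∃ c : ℂ, c • w = v := by
  have hi : ∀ i, hopfFun v i = hopfFun w i := fun i => by rw [h]
  set a := normSq (v 0) with ha
  set b := normSq (v 1) with hb
  set a' := normSq (w 0) with ha'
  set b' := normSq (w 1) with hb'
  have hn : a + b ≠ 0 := (npos v hv).ne'
  have hn' : a' + b' ≠ 0 := (npos w hw).ne'
  -- third coordinate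
  have e2 : (a + b)⁻¹ * (a - b) = (a' + b')⁻¹ * (a' - b') := by
    have := hi 2
    simpa [hopf_apply] using this
  have hab : a * b' = a' * b := by
    have h2 : (a - b) * (a' + b') = (a' - b') * (a + b) := by
      field_simp at e2
      linarith [e2]
    linarith [h2]
  -- first two coordinates
  set p := v 0 * starRingEnd ℂ (v 1) with hp0
  set p' := w 0 * starRingEnd ℂ (w 1) with hp0'
  have e0 : (a + b)⁻¹ * (2 * p.re) = (a' + b')⁻¹ * (2 * p'.re) := by
    have := hi 0
    simp only [hopf_apply, Matrix.cons_val_zero] at this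
    exact this
  have e1 : (a + b)⁻¹ * (2 * p.im) = (a' + b')⁻¹ * (2 * p'.im) := by
    have := hi 1
    simp only [hopf_apply, Matrix.cons_val_one, Matrix.head_cons] at this
    exact this
  have hre : p.re * (a' + b') = p'.re * (a + b) := by
    field_simp at e0
    linarith [e0]
  have him : p.im * (a' + b') = p'.im * (a + b) := by
    field_simp at e1
    linarith [e1]
  have hpC : p * ((a' + b' : ℝ) : ℂ) = p' * ((a + b : ℝ) : ℂ) := by
    apply Complex.ext
    · simpa using hre
    · simpa using him
  by_cases hb0 : b = 0
  · -- v 1 = 0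
    have hv1 : v 1 = 0 := normSq_eq_zero.mp hb0
    have hv0 : v 0 ≠ 0 := by
      intro h0
      exact hv (funext fun i => by fin_cases i <;> simp_all)
    have ha0 : a ≠ 0 := fun h0 => (normSq_eq_zero.mp h0 ▸ hv0) rfl
    have hb0' : b' = 0 := by
      have := hab
      rw [hb0, mul_zero] at this
      rcases mul_eq_zero.mp this with h | h
      · exact absurd h ha0
      · exact h
    have hw1 : w 1 = 0 := normSq_eq_zero.mp hb0'
    have hw0 : w 0 ≠ 0 := by
      intro h0
      exact hw (funext fun i => by fin_cases i <;> simp_all)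
    refine ⟨v 0 * (w 0)⁻¹, funext fun i => ?_⟩
    fin_cases i <;> simp [hv1, hw1, mul_assoc, inv_mul_cancel₀ hw0]
  · -- v 1 ≠ 0 and w 1 ≠ 0
    have hb0' : b' ≠ 0 := by
      intro h0
      apply hb0
      have := hab
      rw [h0, mul_zero] at this
      have ha0' : a' ≠ 0 := by
        intro h1
        have hw0' : w 0 = 0 := normSq_eq_zero.mp h1
        have hw1' : w 1 = 0 := normSq_eq_zero.mp h0
        exact hw (funext fun i => by
          fin_cases i
          · simpa using hw0'
          · simpa using hw1')
      rcases mul_eq_zero.mp this.symm with h | h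
      · exact absurd h ha0'
      · exact h
    have hv1 : v 1 ≠ 0 := fun h0 => hb0 (by rw [hb, h0, normSq_zero])
    have hw1 : w 1 ≠ 0 := fun h0 => hb0' (by rw [hb', h0, normSq_zero])
    have hbC : ((b : ℝ) : ℂ) * ((a' + b' : ℝ) : ℂ) = ((b' : ℝ) : ℂ) * ((a + b : ℝ) : ℂ) := by
      have hbr : b * (a' + b') = b' * (a + b) := by nlinarith [hab]
      push_cast
      exact_mod_cast congrArg (fun x : ℝ => (x : ℂ)) hbr
    have hnC : ((a + b : ℝ) : ℂ) ≠ 0 := by exact_mod_cast hn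
    have hpb : p * ((b' : ℝ) : ℂ) = p' * ((b : ℝ) : ℂ) := by
      refine mul_right_cancel₀ hnC ?_
      calc p * ((b' : ℝ) : ℂ) * ((a + b : ℝ) : ℂ)
          = p * (((b' : ℝ) : ℂ) * ((a + b : ℝ) : ℂ)) := by ring
        _ = p * (((b : ℝ) : ℂ) * ((a' + b' : ℝ) : ℂ)) := by rw [← hbC]
        _ = (p * ((a' + b' : ℝ) : ℂ)) * ((b : ℝ) : ℂ) := by ring
        _ = (p' * ((a + b : ℝ) : ℂ)) * ((b : ℝ) : ℂ) := by rw [hpC]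
        _ = p' * ((b : ℝ) : ℂ) * ((a + b : ℝ) : ℂ) := by ring
    have hkey : v 0 * w 1 = w 0 * v 1 := by
      have hc1 : starRingEnd ℂ (v 1) ≠ 0 := by simpa using hv1
      have hc2 : starRingEnd ℂ (w 1) ≠ 0 := by simpa using hw1
      refine mul_right_cancel₀ (mul_ne_zero hc1 hc2) ?_
      have hb1 : ((b : ℝ) : ℂ) = v 1 * starRingEnd ℂ (v 1) := by
        rw [hb]; exact (Complex.mul_conj _).symm
      have hb1' : ((b' : ℝ) : ℂ) = w 1 * starRingEnd ℂ (w 1) := by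
        rw [hb']; exact (Complex.mul_conj _).symm
      rw [hb1, hb1'] at hpb
      rw [hp0, hp0'] at hpb
      linear_combination hpb
    refine ⟨v 1 * (w 1)⁻¹, funext fun i => ?_⟩
    fin_cases i
    · show v 1 * (w 1)⁻¹ * w 0 = v 0
      field_simp
      linear_combination -hkey
    · show v 1 * (w 1)⁻¹ * w 1 = v 1
      field_simp

lemma hopf_surj (y : EuclideanSpace ℝ (Fin 3)) (hy : ‖y‖ = 1) :
    ∃ v : Fin 2 → ℂ, ∃ hv : v ≠ 0, hopfFun v = y := by
  have hsum : y 0 ^ 2 + y 1 ^ 2 + y 2 ^ 2 = 1 := by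
    rw [EuclideanSpace.norm_eq, Real.sqrt_eq_one] at hy
    simpa [Fin.sum_univ_three, Real.norm_eq_abs, _root_.sq_abs] using hy
  by_cases ht : y 2 = 1
  · refine ⟨![1, 0], by
      intro h
      have := congrFun h 0
      simp at this, ?_⟩
    have h0 : y 0 = 0 := by nlinarith [sq_nonneg (y 0), sq_nonneg (y 1)]
    have h1 : y 1 = 0 := by nlinarith [sq_nonneg (y 0), sq_nonneg (y 1)]
    ext i
    have hy0 : y i = ![(0:ℝ), 0, 1] i := by
      fin_cases i <;> simp [h0, h1, ht]
    rw [hy0]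
    fin_cases i <;>
      simp [hopf_apply, Complex.normSq] <;> norm_num
  · have h1t : (1 : ℝ) - y 2 ≠ 0 := sub_ne_zero.mpr (Ne.symm ht)
    set v : Fin 2 → ℂ := ![⟨y 0, y 1⟩, ((1 - y 2 : ℝ) : ℂ)] with hvdef
    have hv : v ≠ 0 := by
      intro h
      have := congrFun h 1
      simp only [hvdef, Matrix.cons_val_one, Matrix.head_cons, Matrix.cons_val_zero, Pi.zero_apply] at this
      exact h1t (by exact_mod_cast this)
    refine ⟨v, hv, ?_⟩
    have hv0 : v 0 = ⟨y 0, y 1⟩ := rfl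
    have hv1 : v 1 = ((1 - y 2 : ℝ) : ℂ) := rfl
    have ha : normSq (v 0) = y 0 ^ 2 + y 1 ^ 2 := by
      rw [hv0]; simp [normSq_apply]; ring
    have hbb : normSq (v 1) = (1 - y 2) ^ 2 := by
      rw [hv1]; simp [normSq_apply]; ring
    have hpre : (v 0 * starRingEnd ℂ (v 1)).re = y 0 * (1 - y 2) := by
      rw [hv0, hv1]
      simp [Complex.mul_re]
    have hpim : (v 0 * starRingEnd ℂ (v 1)).im = y 1 * (1 - y 2) := by
      rw [hv0, hv1]
      simp [Complex.mul_im]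
    have hnval : normSq (v 0) + normSq (v 1) = 2 * (1 - y 2) := by
      rw [ha, hbb]; nlinarith [hsum]
    ext i
    rw [hopf_apply]
    fin_cases i
    · show (normSq (v 0) + normSq (v 1))⁻¹ * (2 * (v 0 * starRingEnd ℂ (v 1)).re) = y 0
      rw [hnval, hpre]
      field_simp
    · show (normSq (v 0) + normSq (v 1))⁻¹ * (2 * (v 0 * starRingEnd ℂ (v 1)).im) = y 1
      rw [hnval, hpim]
      field_simp
    · show (normSq (v 0) + normSq (v 1))⁻¹ * (normSq (v 0) - normSq (v 1)) = y 2
      rw [hnval, ha, hbb, inv_mul_eq_div, div_eq_iff (by simpa using h1t)]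
      nlinarith [hsum]

theorem complexProjectiveLine_homeomorph_sphere2 :
    Nonempty ((ℙ ℂ (Fin 2 → ℂ)) ≃ₜ (Metric.sphere (0 : EuclideanSpace ℝ (Fin 3)) 1)) := by
  haveI : CompactSpace (ℙ ℂ (Fin 2 → ℂ)) := compact_proj
  have hinj : Function.Injective hopfProj := by
    intro p q
    induction p using Projectivization.ind with
    | h v hv =>
      induction q using Projectivization.ind with
      | h w hw =>
        intro hpq
        have hfv : hopfFun v = hopfFun w := congrArg Subtype.val hpq
        obtain ⟨c, hc⟩ := hopf_inj hv hw hfv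
        have hc0 : c ≠ 0 := by
          rintro rfl
          rw [zero_smul] at hc
          exact hv hc.symm
        rw [Projectivization.mk_eq_mk_iff']
        exact ⟨c, hc⟩
  have hsurj : Function.Surjective hopfProj := by
    rintro ⟨y, hy⟩
    obtain ⟨v, hv, hfv⟩ := hopf_surj y (mem_sphere_zero_iff_norm.mp hy)
    exact ⟨Projectivization.mk ℂ v hv, Subtype.ext hfv⟩
  exact ⟨Continuous.homeoOfEquivCompactToT2 (f := Equiv.ofBijective hopfProj ⟨hinj, hsurj⟩) hopfProj_cont⟩
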